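/- Let v^m_{t+1} = ∇_y g^m(x^m_{t+1}, y^m_{t+1}; ζ^m_{t+1}) + (1 - α_{t+1})[v^m_t - ∇_y g^m(x^m_t, y^m_t; ζ^m_{t+1})] be the STORM momentum-based variance-reduced estimator on each of M clients with independent samples across clients, where each stochastic gradient is unbiased with variance at most σ², each ∇_y g^m(·,·;ζ) is L_g-Lipschitz, 0 < α_{t+1} ≤ 1, and the updates satisfy x^m_{t+1} - x^m_t = η_t(x̂^m_{t+1} - x^m_t), y^m_{t+1} - y^m_t = η_t(ŷ^m_{t+1} - y^m_t). Then E||v̄_{t+1} - (1/M)∑_m ∇_y g^m(x^m_{t+1}, y^m_{t+1})||² ≤ (1 - α_{t+1}) E||v̄_t - (1/M)∑_m ∇_y g^m(x^m_t, y^m_t)||² + 2α_{t+1}²σ²/M + (4L_g²η_t²/M²)∑_{m=1}^M E(||x̂^m_{t+1} - x^m_t||² + ||ŷ^m_{t+1} - y^m_t||²), where v̄_t = (1/M)∑_m v^m_t. -/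

import Mathlib

open MeasureTheory ProbabilityTheory
open scoped ENNReal NNReal RealInnerProductSpace

lemma sq_norm_add_le {E : Type*} [SeminormedAddCommGroup E] (a b : E) :
    ‖a + b‖ ^ 2 ≤ 2 * ‖a‖ ^ 2 + 2 * ‖b‖ ^ 2 := by
  have h := norm_add_le a b
  have h1 : ‖a + b‖ ^ 2 ≤ (‖a‖ + ‖b‖) ^ 2 := by
    apply pow_le_pow_left₀ (norm_nonneg _) h
  nlinarith [sq_nonneg (‖a‖ - ‖b‖)]

lemma memLp2_of_indep_add {Ω : Type*} [MeasurableSpace Ω] {P : Measure Ω} [IsProbabilityMeasure P]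
    {E : Type*} [NormedAddCommGroup E] [MeasurableSpace E] [BorelSpace E]
    [SecondCountableTopology E]
    {X Y : Ω → E} (hX : Measurable X) (hY : Measurable Y)
    (hind : IndepFun X Y P) (h : MemLp (fun ω => X ω + Y ω) 2 P) : MemLp X 2 P := by
  have hmap : P.map (fun ω => (X ω, Y ω)) = (P.map X).prod (P.map Y) :=
    (indepFun_iff_map_prod_eq_prod_map_map hX.aemeasurable hY.aemeasurable).mp hind
  have hnn : ∀ (v : E), (‖(‖v‖ ^ 2 : ℝ)‖₊ : ℝ≥0∞) = (‖v‖₊ : ℝ≥0∞) ^ 2 := by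
    intro v
    rw [pow_two, pow_two]
    simp [nnnorm_mul, nnnorm_norm, ENNReal.coe_mul]
  have h2 : Integrable (fun ω => ‖X ω + Y ω‖ ^ 2) P :=
    (memLp_two_iff_integrable_sq_norm ((hX.add hY).aestronglyMeasurable)).1 h
  have hfin : ∫⁻ ω, (‖X ω + Y ω‖₊ : ℝ≥0∞) ^ 2 ∂P < ⊤ := by
    have h3 : ∫⁻ ω, (‖(‖X ω + Y ω‖ ^ 2 : ℝ)‖₊ : ℝ≥0∞) ∂P < ⊤ := h2.2
    simpa only [hnn] using h3
  have hFmeas : Measurable (fun q : E × E => (‖q.1 + q.2‖₊ : ℝ≥0∞) ^ 2) := by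
    fun_prop
  have hprod : ∫⁻ q, (‖q.1 + q.2‖₊ : ℝ≥0∞) ^ 2 ∂((P.map X).prod (P.map Y)) < ⊤ := by
    rw [← hmap, lintegral_map hFmeas (hX.prodMk hY)]
    exact hfin
  rw [lintegral_prod_symm' _ hFmeas] at hprod
  have hmY : IsProbabilityMeasure (P.map Y) := Measure.isProbabilityMeasure_map hY.aemeasurable
  have hmX : IsProbabilityMeasure (P.map X) := Measure.isProbabilityMeasure_map hX.aemeasurable
  -- a.e. y, the inner integral is finite; pick one
  have hae : ∀ᵐ y ∂(P.map Y), (∫⁻ x, (‖x + y‖₊ : ℝ≥0∞) ^ 2 ∂(P.map X)) < ⊤ := by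
    apply ae_lt_top
    · have hm : Measurable fun q : E × E => (‖q.2 + q.1‖₊ : ℝ≥0∞) ^ 2 := by fun_prop
      exact hm.lintegral_prod_right' (ν := P.map X)
    · exact hprod.ne
  obtain ⟨y₀, hy₀⟩ := hae.exists
  have hXfin : ∫⁻ x, (‖x‖₊ : ℝ≥0∞) ^ 2 ∂(P.map X) < ⊤ := by
    have hb : ∀ x : E, (‖x‖₊ : ℝ≥0∞) ^ 2 ≤ 4 * (‖x + y₀‖₊ : ℝ≥0∞) ^ 2 + 4 * (‖y₀‖₊ : ℝ≥0∞) ^ 2 := by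
      intro x
      have h1 : (‖x‖₊ : ℝ≥0∞) ≤ (‖x + y₀‖₊ : ℝ≥0∞) + (‖y₀‖₊ : ℝ≥0∞) := by
        have : ‖x‖₊ ≤ ‖x + y₀‖₊ + ‖y₀‖₊ := by
          simpa using nnnorm_add_le (x + y₀) (-y₀)
        exact_mod_cast this
      calc (‖x‖₊ : ℝ≥0∞) ^ 2 ≤ ((‖x + y₀‖₊ : ℝ≥0∞) + (‖y₀‖₊ : ℝ≥0∞)) ^ 2 := by
            exact pow_le_pow_left' h1 2
        _ ≤ (2 * max (‖x + y₀‖₊ : ℝ≥0∞) (‖y₀‖₊ : ℝ≥0∞)) ^ 2 := by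
            apply pow_le_pow_left'
            rw [two_mul]
            exact add_le_add (le_max_left _ _) (le_max_right _ _)
        _ = 4 * max (‖x + y₀‖₊ : ℝ≥0∞) (‖y₀‖₊ : ℝ≥0∞) ^ 2 := by ring
        _ ≤ 4 * (‖x + y₀‖₊ : ℝ≥0∞) ^ 2 + 4 * (‖y₀‖₊ : ℝ≥0∞) ^ 2 := by
            rcases max_cases ((‖x + y₀‖₊ : ℝ≥0∞)) ((‖y₀‖₊ : ℝ≥0∞)) with ⟨h, _⟩ | ⟨h, _⟩ <;>
              rw [h] <;> [exact le_add_of_nonneg_right zero_le;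
                exact le_add_of_nonneg_left zero_le]
    calc ∫⁻ x, (‖x‖₊ : ℝ≥0∞) ^ 2 ∂(P.map X)
        ≤ ∫⁻ x, (4 * (‖x + y₀‖₊ : ℝ≥0∞) ^ 2 + 4 * (‖y₀‖₊ : ℝ≥0∞) ^ 2) ∂(P.map X) :=
          lintegral_mono hb
      _ ≤ 4 * (∫⁻ x, (‖x + y₀‖₊ : ℝ≥0∞) ^ 2 ∂(P.map X)) + 4 * (‖y₀‖₊ : ℝ≥0∞) ^ 2 := by
          rw [lintegral_add_right _ (by fun_prop), lintegral_const_mul 4 (by fun_prop),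
            lintegral_const]
          simp [measure_univ]
      _ < ⊤ := by
          apply ENNReal.add_lt_top.mpr
          constructor
          · exact ENNReal.mul_lt_top (by simp) hy₀
          · exact ENNReal.mul_lt_top (by simp) (by simp [ENNReal.pow_lt_top, ENNReal.coe_lt_top])
  have hXfin' : ∫⁻ ω, (‖X ω‖₊ : ℝ≥0∞) ^ 2 ∂P < ⊤ := by
    have h5 : ∫⁻ x, (‖x‖₊ : ℝ≥0∞) ^ 2 ∂(P.map X) = ∫⁻ ω, (‖X ω‖₊ : ℝ≥0∞) ^ 2 ∂P :=
      lintegral_map (by fun_prop) hX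
    rwa [h5] at hXfin
  rw [memLp_two_iff_integrable_sq_norm hX.aestronglyMeasurable]
  refine ⟨(hX.norm.pow_const 2).aestronglyMeasurable, ?_⟩
  have : ∫⁻ ω, (‖(‖X ω‖ ^ 2 : ℝ)‖₊ : ℝ≥0∞) ∂P < ⊤ := by simpa only [hnn] using hXfin'
  exact this

lemma integrable_inner_of_memLp2 {Ω : Type*} [MeasurableSpace Ω] {P : Measure Ω} {E : Type*} [NormedAddCommGroup E] [InnerProductSpace ℝ E]
    {U V : Ω → E} (hU : MemLp U 2 P) (hV : MemLp V 2 P) :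
    Integrable (fun ω => ⟪U ω, V ω⟫) P := by
  have hUi : Integrable (fun ω => ‖U ω‖ ^ 2) P :=
    (memLp_two_iff_integrable_sq_norm hU.aestronglyMeasurable).1 hU
  have hVi : Integrable (fun ω => ‖V ω‖ ^ 2) P :=
    (memLp_two_iff_integrable_sq_norm hV.aestronglyMeasurable).1 hV
  refine Integrable.mono' ((hUi.add hVi).const_mul (1/2 : ℝ))
    (hU.aestronglyMeasurable.inner hV.aestronglyMeasurable) ?_
  filter_upwards with ω
  have h1 := abs_real_inner_le_norm (U ω) (V ω)
  have h2 : ‖U ω‖ * ‖V ω‖ ≤ (1/2) * (‖U ω‖ ^ 2 + ‖V ω‖ ^ 2) := by nlinarith [sq_nonneg (‖U ω‖ - ‖V ω‖)]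
  calc ‖⟪U ω, V ω⟫‖ = |⟪U ω, V ω⟫| := Real.norm_eq_abs _
    _ ≤ ‖U ω‖ * ‖V ω‖ := h1
    _ ≤ (1/2) * (‖U ω‖ ^ 2 + ‖V ω‖ ^ 2) := h2

lemma second_moment_center_le {Ω : Type*} [MeasurableSpace Ω] {P : Measure Ω} [IsProbabilityMeasure P] {E : Type*} [NormedAddCommGroup E] [InnerProductSpace ℝ E]
    [CompleteSpace E] {f : Ω → E} (hf : Integrable f P)
    (hf2 : Integrable (fun ω => ‖f ω‖ ^ 2) P) (c : E) (hc : c = ∫ ω, f ω ∂P) :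
    ∫ ω, ‖f ω - c‖ ^ 2 ∂P ≤ ∫ ω, ‖f ω‖ ^ 2 ∂P := by
  have hinner : Integrable (fun ω => ⟪c, f ω⟫) P := by
    have := ContinuousLinearMap.integrable_comp (innerSL ℝ c) hf
    simpa using this
  have hexp : ∀ ω, ‖f ω - c‖ ^ 2 = ‖f ω‖ ^ 2 - 2 * ⟪c, f ω⟫ + ‖c‖ ^ 2 := by
    intro ω
    rw [norm_sub_sq_real]
    ring_nf
    rw [real_inner_comm]
    ring
  calc ∫ ω, ‖f ω - c‖ ^ 2 ∂P = ∫ ω, (‖f ω‖ ^ 2 - 2 * ⟪c, f ω⟫ + ‖c‖ ^ 2) ∂P := by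
        exact integral_congr_ae (Filter.Eventually.of_forall fun ω => hexp ω)
    _ = ∫ ω, ‖f ω‖ ^ 2 ∂P - 2 * ⟪c, ∫ ω, f ω ∂P⟫ + ‖c‖ ^ 2 := by
        have hA : Integrable (fun ω => ‖f ω‖ ^ 2 - 2 * ⟪c, f ω⟫) P :=
          hf2.sub (hinner.const_mul 2)
        rw [integral_add hA (integrable_const _), integral_sub hf2 (hinner.const_mul 2),
          integral_const_mul, integral_inner hf c, integral_const]
        simp
    _ ≤ ∫ ω, ‖f ω‖ ^ 2 ∂P := by
        rw [← hc, real_inner_self_eq_norm_sq]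
        nlinarith [sq_nonneg ‖c‖]

lemma integral_inner_eq_zero_of_indep {Ω : Type*} [MeasurableSpace Ω] {P : Measure Ω}
    [IsProbabilityMeasure P] {p : ℕ} {U V : Ω → EuclideanSpace ℝ (Fin p)}
    (hU : Measurable U) (hV : Measurable V) (hUV : IndepFun U V P)
    (hU2 : MemLp U 2 P) (hV2 : MemLp V 2 P)
    (hUz : ∫ ω, U ω ∂P = 0) (hVz : ∫ ω, V ω ∂P = 0) :
    ∫ ω, ⟪U ω, V ω⟫ ∂P = 0 := by
  have hproj : ∀ i : Fin p, Measurable (fun u : EuclideanSpace ℝ (Fin p) => u i) := by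
    intro i
    exact (EuclideanSpace.proj (𝕜 := ℝ) i).continuous.measurable
  have hUc2 : ∀ i, MemLp (fun ω => U ω i) 2 P := fun i =>
    (EuclideanSpace.proj (𝕜 := ℝ) i).comp_memLp' hU2
  have hVc2 : ∀ i, MemLp (fun ω => V ω i) 2 P := fun i =>
    (EuclideanSpace.proj (𝕜 := ℝ) i).comp_memLp' hV2
  have hintprod : ∀ i : Fin p, Integrable (fun ω => U ω i * V ω i) P := fun i =>
    (hUV.comp (hproj i) (hproj i)).integrable_mul
      ((hUc2 i).integrable one_le_two) ((hVc2 i).integrable one_le_two)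
  have hUci : ∀ i, ∫ ω, U ω i ∂P = 0 := by
    intro i
    have := (EuclideanSpace.proj (𝕜 := ℝ) i).integral_comp_comm (hU2.integrable one_le_two)
    simpa [hUz] using this
  have hVci : ∀ i, ∫ ω, V ω i ∂P = 0 := by
    intro i
    have := (EuclideanSpace.proj (𝕜 := ℝ) i).integral_comp_comm (hV2.integrable one_le_two)
    simpa [hVz] using this
  have hpt : ∀ ω, ⟪U ω, V ω⟫ = ∑ i, U ω i * V ω i := by
    intro ω
    simp [PiLp.inner_apply, RCLike.inner_apply, starRingEnd_apply, mul_comm]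
  calc ∫ ω, ⟪U ω, V ω⟫ ∂P = ∫ ω, ∑ i, U ω i * V ω i ∂P :=
        integral_congr_ae (Filter.Eventually.of_forall hpt)
    _ = ∑ i, ∫ ω, U ω i * V ω i ∂P := integral_finset_sum _ fun i _ => hintprod i
    _ = ∑ i : Fin p, (∫ ω, U ω i ∂P) * (∫ ω, V ω i ∂P) := by
        refine Finset.sum_congr rfl fun i _ => ?_
        exact (hUV.comp (hproj i) (hproj i)).integral_mul_eq_mul_integral
          ((hUc2 i).integrable one_le_two).aestronglyMeasurable ((hVc2 i).integrable one_le_two).aestronglyMeasurable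
    _ = 0 := by simp [hUci]

set_option maxHeartbeats 1000000 in
theorem storm_variance_step
    {Ω : Type*} [MeasurableSpace Ω] (P : Measure Ω) [IsProbabilityMeasure P]
    {Z : Type*} [MeasurableSpace Z]
    (d p M : ℕ) (hM : 0 < M)
    (σ Lg α η : ℝ) (hσ : 0 ≤ σ) (hα : 0 < α) (hα1 : α ≤ 1) (hLg : 0 ≤ Lg)
    (G : Fin M → EuclideanSpace ℝ (Fin d) → EuclideanSpace ℝ (Fin p) → Z →
      EuclideanSpace ℝ (Fin p))
    (gbar : Fin M → EuclideanSpace ℝ (Fin d) → EuclideanSpace ℝ (Fin p) →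
      EuclideanSpace ℝ (Fin p))
    (ζ : Fin M → Ω → Z)
    (hζmeas : ∀ m, Measurable (ζ m))
    (hGmeas : ∀ m x y, Measurable (G m x y))
    (hindep : iIndepFun ζ P)
    (hunbiased : ∀ m x y, ∫ ω, G m x y (ζ m ω) ∂P = gbar m x y)
    (hvar : ∀ m x y, ∫ ω, ‖G m x y (ζ m ω) - gbar m x y‖ ^ 2 ∂P ≤ σ ^ 2)
    (hlip : ∀ m z x x' y y', ‖G m x y z - G m x' y' z‖ ≤
      Lg * Real.sqrt (‖x - x'‖ ^ 2 + ‖y - y'‖ ^ 2))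
    (x0 x1 xhat : Fin M → EuclideanSpace ℝ (Fin d))
    (y0 y1 yhat : Fin M → EuclideanSpace ℝ (Fin p))
    (v0 : Fin M → EuclideanSpace ℝ (Fin p))
    (hx : ∀ m, x1 m - x0 m = η • (xhat m - x0 m))
    (hy : ∀ m, y1 m - y0 m = η • (yhat m - y0 m))
    (vnext : Fin M → Ω → EuclideanSpace ℝ (Fin p))
    (hv : ∀ m ω, vnext m ω = G m (x1 m) (y1 m) (ζ m ω) +
      (1 - α) • (v0 m - G m (x0 m) (y0 m) (ζ m ω))) :
    ∫ ω, ‖(M : ℝ)⁻¹ • ∑ m, vnext m ω - (M : ℝ)⁻¹ • ∑ m, gbar m (x1 m) (y1 m)‖ ^ 2 ∂P ≤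
      (1 - α) * ‖(M : ℝ)⁻¹ • ∑ m, v0 m - (M : ℝ)⁻¹ • ∑ m, gbar m (x0 m) (y0 m)‖ ^ 2 +
      2 * α ^ 2 * σ ^ 2 / M +
      (4 * Lg ^ 2 * η ^ 2 / (M : ℝ) ^ 2) *
        ∑ m, (‖xhat m - x0 m‖ ^ 2 + ‖yhat m - y0 m‖ ^ 2) := by
  classical
  have hM0 : (M : ℝ) ≠ 0 := Nat.cast_ne_zero.mpr hM.ne'
  set A : Fin M → Ω → EuclideanSpace ℝ (Fin p) := fun m ω =>
    G m (x1 m) (y1 m) (ζ m ω) - gbar m (x1 m) (y1 m) with hA_def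
  set Gd : Fin M → Ω → EuclideanSpace ℝ (Fin p) := fun m ω =>
    G m (x1 m) (y1 m) (ζ m ω) - G m (x0 m) (y0 m) (ζ m ω) with hGd_def
  set B : Fin M → Ω → EuclideanSpace ℝ (Fin p) := fun m ω =>
    Gd m ω - (gbar m (x1 m) (y1 m) - gbar m (x0 m) (y0 m)) with hB_def
  set D : Fin M → Ω → EuclideanSpace ℝ (Fin p) := fun m ω =>
    α • A m ω + (1 - α) • B m ω with hD_def
  set C : EuclideanSpace ℝ (Fin p) :=
    (M : ℝ)⁻¹ • ∑ m, v0 m - (M : ℝ)⁻¹ • ∑ m, gbar m (x0 m) (y0 m) with hC_def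
  set S : Ω → EuclideanSpace ℝ (Fin p) := fun ω => (M : ℝ)⁻¹ • ∑ m, D m ω with hS_def
  set Lm : Fin M → ℝ := fun m =>
    Lg * Real.sqrt (‖x1 m - x0 m‖ ^ 2 + ‖y1 m - y0 m‖ ^ 2) with hLm_def
  have hLm_nonneg : ∀ m, 0 ≤ Lm m := fun m => mul_nonneg hLg (Real.sqrt_nonneg _)
  have hLmsq : ∀ m, Lm m ^ 2 =
      Lg ^ 2 * η ^ 2 * (‖xhat m - x0 m‖ ^ 2 + ‖yhat m - y0 m‖ ^ 2) := by
    intro m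
    have hs : (0:ℝ) ≤ ‖x1 m - x0 m‖ ^ 2 + ‖y1 m - y0 m‖ ^ 2 := by positivity
    rw [hLm_def]
    rw [mul_pow, Real.sq_sqrt hs, hx m, hy m, norm_smul, norm_smul, mul_pow, mul_pow]
    simp only [Real.norm_eq_abs, sq_abs]
    ring
  have hGd_bdd : ∀ m ω, ‖Gd m ω‖ ≤ Lm m := fun m ω =>
    hlip m (ζ m ω) (x1 m) (x0 m) (y1 m) (y0 m)
  have hGζmeas : ∀ m x y, Measurable (fun ω => G m x y (ζ m ω)) :=
    fun m x y => (hGmeas m x y).comp (hζmeas m)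
  have hAmeas : ∀ m, Measurable (A m) := fun m => (hGζmeas m _ _).sub measurable_const
  have hGdmeas : ∀ m, Measurable (Gd m) := fun m => (hGζmeas m _ _).sub (hGζmeas m _ _)
  have hBmeas : ∀ m, Measurable (B m) := fun m => (hGdmeas m).sub measurable_const
  have hDmeas : ∀ m, Measurable (D m) :=
    fun m => ((hAmeas m).const_smul α).add ((hBmeas m).const_smul (1 - α))
  have hSmeas : Measurable S := by
    apply Measurable.fun_const_smul
    exact Finset.measurable_sum _ fun m _ => hDmeas m
  have hB2 : ∀ m, MemLp (B m) 2 P := by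
    intro m
    have hbdd : ∀ᵐ ω ∂P, ‖B m ω‖ ≤
        Lm m + ‖gbar m (x1 m) (y1 m) - gbar m (x0 m) (y0 m)‖ := by
      filter_upwards with ω
      calc ‖B m ω‖ ≤ ‖Gd m ω‖ + ‖gbar m (x1 m) (y1 m) - gbar m (x0 m) (y0 m)‖ :=
            norm_sub_le _ _
        _ ≤ _ := by gcongr; exact hGd_bdd m ω
    exact (memLp_top_of_bound (hBmeas m).aestronglyMeasurable _ hbdd).mono_exponent
      le_top
  have hAind : iIndepFun A P := by
    have h := hindep.comp (fun m z => G m (x1 m) (y1 m) z - gbar m (x1 m) (y1 m))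
      (fun m => (hGmeas m _ _).sub measurable_const)
    exact h
  have hDind : iIndepFun D P := by
    have h := hindep.comp (fun m z =>
        α • (G m (x1 m) (y1 m) z - gbar m (x1 m) (y1 m)) +
        (1 - α) • ((G m (x1 m) (y1 m) z - G m (x0 m) (y0 m) z) -
          (gbar m (x1 m) (y1 m) - gbar m (x0 m) (y0 m))))
      (fun m => (((hGmeas m _ _).sub measurable_const).const_smul α).add
        ((((hGmeas m _ _).sub (hGmeas m _ _)).sub measurable_const).const_smul (1 - α)))
    exact h
  have hpt : ∀ ω, (M : ℝ)⁻¹ • ∑ m, vnext m ω - (M : ℝ)⁻¹ • ∑ m, gbar m (x1 m) (y1 m)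
      = (1 - α) • C + S ω := by
    intro ω
    have h1 : ∀ m : Fin M, vnext m ω - gbar m (x1 m) (y1 m)
        = (1 - α) • (v0 m - gbar m (x0 m) (y0 m)) + D m ω := by
      intro m
      rw [hv, hD_def, hA_def, hB_def, hGd_def]
      module
    calc (M : ℝ)⁻¹ • ∑ m, vnext m ω - (M : ℝ)⁻¹ • ∑ m, gbar m (x1 m) (y1 m)
        = (M : ℝ)⁻¹ • ∑ m, (vnext m ω - gbar m (x1 m) (y1 m)) := by
          rw [Finset.sum_sub_distrib, smul_sub]
      _ = (M : ℝ)⁻¹ • ∑ m, ((1 - α) • (v0 m - gbar m (x0 m) (y0 m)) + D m ω) := by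
          rw [Finset.sum_congr rfl fun m _ => h1 m]
      _ = (1 - α) • C + S ω := by
          rw [hS_def, hC_def, Finset.sum_add_distrib, smul_add, ← Finset.smul_sum,
            smul_comm ((M : ℝ)⁻¹) (1 - α), Finset.sum_sub_distrib, smul_sub]
  have hLHSfun : (fun ω => ‖(M : ℝ)⁻¹ • ∑ m, vnext m ω - (M : ℝ)⁻¹ • ∑ m, gbar m (x1 m) (y1 m)‖ ^ 2)
      = fun ω => ‖(1 - α) • C + S ω‖ ^ 2 := by
    funext ω; rw [hpt ω]
  have hRHS3_nonneg : (0:ℝ) ≤ ∑ m, (‖xhat m - x0 m‖ ^ 2 + ‖yhat m - y0 m‖ ^ 2) :=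
    Finset.sum_nonneg fun m _ => by positivity
  by_cases hI : ∀ m, MemLp (A m) 2 P
  · -- main case
    have hGint1 : ∀ m, Integrable (fun ω => G m (x1 m) (y1 m) (ζ m ω)) P := by
      intro m
      have h1 : Integrable (A m) P := (hI m).integrable one_le_two
      have h2 : Integrable (fun ω => A m ω + gbar m (x1 m) (y1 m)) P :=
        h1.add (integrable_const (gbar m (x1 m) (y1 m)))
      have h3 : (fun ω => A m ω + gbar m (x1 m) (y1 m))
          = fun ω => G m (x1 m) (y1 m) (ζ m ω) := by
        funext ω; rw [hA_def]; module
      rwa [h3] at h2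
    have hGdint : ∀ m, Integrable (Gd m) P := fun m =>
      Integrable.mono' (integrable_const (Lm m)) (hGdmeas m).aestronglyMeasurable
        (Filter.Eventually.of_forall fun ω => hGd_bdd m ω)
    have hGint0 : ∀ m, Integrable (fun ω => G m (x0 m) (y0 m) (ζ m ω)) P := by
      intro m
      have h1 : Integrable (fun ω => G m (x1 m) (y1 m) (ζ m ω) - Gd m ω) P :=
        (hGint1 m).sub (hGdint m)
      have h2 : (fun ω => G m (x1 m) (y1 m) (ζ m ω) - Gd m ω)
          = fun ω => G m (x0 m) (y0 m) (ζ m ω) := by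
        funext ω; rw [hGd_def]; module
      rwa [h2] at h1
    have hGdavg : ∀ m, ∫ ω, Gd m ω ∂P
        = gbar m (x1 m) (y1 m) - gbar m (x0 m) (y0 m) := by
      intro m
      rw [hGd_def]
      rw [integral_sub (hGint1 m) (hGint0 m), hunbiased, hunbiased]
    have hBint : ∀ m, Integrable (B m) P := fun m => (hB2 m).integrable one_le_two
    have hBzero : ∀ m, ∫ ω, B m ω ∂P = 0 := by
      intro m
      rw [hB_def]
      rw [integral_sub (hGdint m) (integrable_const _), hGdavg m, integral_const]
      simp
    have hAzero : ∀ m, ∫ ω, A m ω ∂P = 0 := by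
      intro m
      rw [hA_def]
      rw [integral_sub (hGint1 m) (integrable_const _), hunbiased, integral_const]
      simp
    have hD2 : ∀ m, MemLp (D m) 2 P :=
      fun m => ((hI m).const_smul α).add ((hB2 m).const_smul (1 - α))
    have hDint : ∀ m, Integrable (D m) P := fun m => (hD2 m).integrable one_le_two
    have hDzero : ∀ m, ∫ ω, D m ω ∂P = 0 := by
      intro m
      have hi1 : Integrable (fun ω => α • A m ω) P :=
        ((hI m).integrable one_le_two).smul α
      have hi2 : Integrable (fun ω => (1 - α) • B m ω) P := (hBint m).smul (1 - α)
      rw [hD_def]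
      rw [integral_add hi1 hi2, integral_smul, integral_smul, hAzero m, hBzero m]
      simp
    have hA2int : ∀ m, Integrable (fun ω => ‖A m ω‖ ^ 2) P := fun m =>
      (memLp_two_iff_integrable_sq_norm (hAmeas m).aestronglyMeasurable).1 (hI m)
    have hB2int : ∀ m, Integrable (fun ω => ‖B m ω‖ ^ 2) P := fun m =>
      (memLp_two_iff_integrable_sq_norm (hBmeas m).aestronglyMeasurable).1 (hB2 m)
    have hD2int : ∀ m, Integrable (fun ω => ‖D m ω‖ ^ 2) P := fun m =>
      (memLp_two_iff_integrable_sq_norm (hDmeas m).aestronglyMeasurable).1 (hD2 m)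
    have hGd2int : ∀ m, Integrable (fun ω => ‖Gd m ω‖ ^ 2) P := by
      intro m
      refine Integrable.mono' (integrable_const (Lm m ^ 2))
        ((hGdmeas m).norm.pow_const 2).aestronglyMeasurable ?_
      filter_upwards with ω
      rw [Real.norm_eq_abs, abs_of_nonneg (by positivity)]
      exact pow_le_pow_left₀ (norm_nonneg _) (hGd_bdd m ω) 2
    have hBvar : ∀ m, ∫ ω, ‖B m ω‖ ^ 2 ∂P ≤ Lm m ^ 2 := by
      intro m
      have h1 : ∫ ω, ‖B m ω‖ ^ 2 ∂P ≤ ∫ ω, ‖Gd m ω‖ ^ 2 ∂P := by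
        rw [hB_def]
        exact second_moment_center_le (hGdint m) (hGd2int m) _ (hGdavg m).symm
      refine h1.trans ?_
      calc ∫ ω, ‖Gd m ω‖ ^ 2 ∂P ≤ ∫ _ω, Lm m ^ 2 ∂P := by
            refine integral_mono (hGd2int m) (integrable_const _) fun ω => ?_
            exact pow_le_pow_left₀ (norm_nonneg _) (hGd_bdd m ω) 2
        _ = Lm m ^ 2 := by simp
    have hDsq : ∀ m, ∫ ω, ‖D m ω‖ ^ 2 ∂P ≤ 2 * α ^ 2 * σ ^ 2 + 2 * Lm m ^ 2 := by
      intro m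
      have hpt2 : ∀ ω, ‖D m ω‖ ^ 2 ≤ 2 * α ^ 2 * ‖A m ω‖ ^ 2 + 2 * ‖B m ω‖ ^ 2 := by
        intro ω
        have h0 := sq_norm_add_le (α • A m ω) ((1 - α) • B m ω)
        rw [norm_smul, norm_smul] at h0
        have e1 : 2 * (‖(α:ℝ)‖ * ‖A m ω‖) ^ 2 = 2 * α ^ 2 * ‖A m ω‖ ^ 2 := by
          rw [mul_pow, Real.norm_eq_abs, sq_abs]; ring
        have e2 : 2 * (‖(1 - α : ℝ)‖ * ‖B m ω‖) ^ 2 ≤ 2 * ‖B m ω‖ ^ 2 := by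
          rw [mul_pow, Real.norm_eq_abs, sq_abs]
          have h1a : (1 - α) ^ 2 ≤ 1 := by nlinarith
          have h1b := mul_le_mul_of_nonneg_right h1a (sq_nonneg (‖B m ω‖))
          rw [one_mul] at h1b
          linarith
        calc ‖D m ω‖ ^ 2 = ‖α • A m ω + (1 - α) • B m ω‖ ^ 2 := by rw [hD_def]
          _ ≤ 2 * (‖(α:ℝ)‖ * ‖A m ω‖) ^ 2 + 2 * (‖(1 - α : ℝ)‖ * ‖B m ω‖) ^ 2 := h0
          _ ≤ 2 * α ^ 2 * ‖A m ω‖ ^ 2 + 2 * ‖B m ω‖ ^ 2 := by linarith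
      have hint : Integrable (fun ω => 2 * α ^ 2 * ‖A m ω‖ ^ 2 + 2 * ‖B m ω‖ ^ 2) P :=
        ((hA2int m).const_mul (2 * α ^ 2)).add ((hB2int m).const_mul 2)
      calc ∫ ω, ‖D m ω‖ ^ 2 ∂P
          ≤ ∫ ω, (2 * α ^ 2 * ‖A m ω‖ ^ 2 + 2 * ‖B m ω‖ ^ 2) ∂P :=
            integral_mono (hD2int m) hint hpt2
        _ = 2 * α ^ 2 * ∫ ω, ‖A m ω‖ ^ 2 ∂P + 2 * ∫ ω, ‖B m ω‖ ^ 2 ∂P := by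
            rw [integral_add ((hA2int m).const_mul (2 * α ^ 2)) ((hB2int m).const_mul 2),
              integral_const_mul, integral_const_mul]
        _ ≤ 2 * α ^ 2 * σ ^ 2 + 2 * Lm m ^ 2 := by
            have h1 : ∫ ω, ‖A m ω‖ ^ 2 ∂P ≤ σ ^ 2 := by
              have := hvar m (x1 m) (y1 m)
              rw [hA_def]; exact this
            have h2 := hBvar m
            have h3 : (0:ℝ) ≤ 2 * α ^ 2 := by positivity
            nlinarith
    have hS2 : MemLp S 2 P := by
      have h0 : MemLp ((M:ℝ)⁻¹ • ∑ i, D i) 2 P :=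
        (memLp_finset_sum' Finset.univ fun m _ => hD2 m).const_smul ((M:ℝ)⁻¹)
      have h1 : ((M:ℝ)⁻¹ • ∑ i, D i) = S := by
        funext ω; rw [hS_def]; simp [Finset.sum_apply]
      rwa [h1] at h0
    have hSint : Integrable S P := hS2.integrable one_le_two
    have hS2int : Integrable (fun ω => ‖S ω‖ ^ 2) P :=
      (memLp_two_iff_integrable_sq_norm hSmeas.aestronglyMeasurable).1 hS2
    have hSzero : ∫ ω, S ω ∂P = 0 := by
      rw [hS_def]
      rw [integral_smul]
      rw [integral_finset_sum _ fun m _ => hDint m]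
      simp [hDzero]
    have hinner_int : Integrable (fun ω => 2 * ⟪(1 - α) • C, S ω⟫) P := by
      have h1 : Integrable (fun ω => ⟪(1 - α) • C, S ω⟫) P :=
        ContinuousLinearMap.integrable_comp (innerSL ℝ ((1 - α) • C)) hSint
      exact h1.const_mul 2
    have hLHS : ∫ ω, ‖(1 - α) • C + S ω‖ ^ 2 ∂P
        = ‖(1 - α) • C‖ ^ 2 + ∫ ω, ‖S ω‖ ^ 2 ∂P := by
      have hptn : ∀ ω, ‖(1 - α) • C + S ω‖ ^ 2
          = ‖(1 - α) • C‖ ^ 2 + 2 * ⟪(1 - α) • C, S ω⟫ + ‖S ω‖ ^ 2 :=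
        fun ω => norm_add_sq_real _ _
      rw [integral_congr_ae (Filter.Eventually.of_forall hptn)]
      have hiA : Integrable (fun ω => ‖(1 - α) • C‖ ^ 2 + 2 * ⟪(1 - α) • C, S ω⟫) P :=
        (integrable_const _).add hinner_int
      have hiB : Integrable (fun _ω : Ω => ‖(1 - α) • C‖ ^ 2) P := integrable_const _
      rw [integral_add hiA hS2int, integral_add hiB hinner_int, integral_const,
        integral_const_mul]
      have h2 : ∫ ω, ⟪(1 - α) • C, S ω⟫ ∂P = 0 := by
        have h4 := integral_inner (𝕜 := ℝ) hSint ((1 - α) • C)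
        rw [h4, hSzero, inner_zero_right]
      rw [h2]
      simp
    have hScross : ∫ ω, ‖S ω‖ ^ 2 ∂P = ((M:ℝ)⁻¹) ^ 2 * ∑ m, ∫ ω, ‖D m ω‖ ^ 2 ∂P := by
      have hptS : ∀ ω, ‖S ω‖ ^ 2
          = ((M:ℝ)⁻¹) ^ 2 * ∑ m, ∑ m', ⟪D m ω, D m' ω⟫ := by
        intro ω
        rw [hS_def]
        rw [norm_smul, mul_pow]
        congr 1
        · simp [Real.norm_eq_abs, sq_abs]
        · rw [← real_inner_self_eq_norm_sq, sum_inner]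
          exact Finset.sum_congr rfl fun m _ => by rw [inner_sum]
      rw [integral_congr_ae (Filter.Eventually.of_forall hptS), integral_const_mul]
      congr 1
      rw [integral_finset_sum _ fun m _ =>
        integrable_finset_sum _ fun m' _ => integrable_inner_of_memLp2 (hD2 m) (hD2 m')]
      refine Finset.sum_congr rfl fun m _ => ?_
      rw [integral_finset_sum _ fun m' _ => integrable_inner_of_memLp2 (hD2 m) (hD2 m')]
      rw [Finset.sum_eq_single_of_mem m (Finset.mem_univ m)]
      · rw [integral_congr_ae (Filter.Eventually.of_forall fun ω =>
          real_inner_self_eq_norm_sq (D m ω))]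
      · intro m' _ hne
        exact integral_inner_eq_zero_of_indep (hDmeas m) (hDmeas m')
          (hDind.indepFun (Ne.symm hne)) (hD2 m) (hD2 m') (hDzero m) (hDzero m')
    -- final assembly
    rw [hLHSfun, hLHS, hScross]
    have hC1 : ‖(1 - α) • C‖ ^ 2 ≤ (1 - α) * ‖C‖ ^ 2 := by
      rw [norm_smul, Real.norm_eq_abs, mul_pow, sq_abs]
      have h1 : (1 - α) ^ 2 ≤ (1 - α) := by nlinarith
      exact mul_le_mul_of_nonneg_right h1 (sq_nonneg _)
    have hsum1 : ((M:ℝ)⁻¹) ^ 2 * ∑ m, ∫ ω, ‖D m ω‖ ^ 2 ∂P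
        ≤ 2 * α ^ 2 * σ ^ 2 / M + (4 * Lg ^ 2 * η ^ 2 / (M : ℝ) ^ 2) *
          ∑ m, (‖xhat m - x0 m‖ ^ 2 + ‖yhat m - y0 m‖ ^ 2) := by
      have h1 : ∑ m, ∫ ω, ‖D m ω‖ ^ 2 ∂P ≤ ∑ m, (2 * α ^ 2 * σ ^ 2 + 2 * Lm m ^ 2) :=
        Finset.sum_le_sum fun m _ => hDsq m
      have h2 : ∑ m, (2 * α ^ 2 * σ ^ 2 + 2 * Lm m ^ 2)
          = M * (2 * α ^ 2 * σ ^ 2) + 2 * Lg ^ 2 * η ^ 2 *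
            ∑ m, (‖xhat m - x0 m‖ ^ 2 + ‖yhat m - y0 m‖ ^ 2) := by
        rw [Finset.sum_add_distrib, Finset.sum_const, Finset.card_univ, Fintype.card_fin,
          nsmul_eq_mul, Finset.mul_sum]
        congr 1
        refine Finset.sum_congr rfl fun m _ => ?_
        rw [hLmsq m]; ring
      have h3 : (0:ℝ) < (M:ℝ) := by positivity
      have h4 : ((M:ℝ)⁻¹) ^ 2 * ∑ m, ∫ ω, ‖D m ω‖ ^ 2 ∂P
          ≤ ((M:ℝ)⁻¹) ^ 2 * (M * (2 * α ^ 2 * σ ^ 2) + 2 * Lg ^ 2 * η ^ 2 *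
            ∑ m, (‖xhat m - x0 m‖ ^ 2 + ‖yhat m - y0 m‖ ^ 2)) := by
        rw [← h2]
        exact mul_le_mul_of_nonneg_left h1 (by positivity)
      refine h4.trans ?_
      rw [mul_add]
      have h5 : ((M:ℝ)⁻¹) ^ 2 * (M * (2 * α ^ 2 * σ ^ 2)) = 2 * α ^ 2 * σ ^ 2 / M := by
        field_simp
      have h6 : ((M:ℝ)⁻¹) ^ 2 * (2 * Lg ^ 2 * η ^ 2 *
            ∑ m, (‖xhat m - x0 m‖ ^ 2 + ‖yhat m - y0 m‖ ^ 2))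
          ≤ (4 * Lg ^ 2 * η ^ 2 / (M : ℝ) ^ 2) *
            ∑ m, (‖xhat m - x0 m‖ ^ 2 + ‖yhat m - y0 m‖ ^ 2) := by
        have hcoef : ((M:ℝ)⁻¹) ^ 2 * (2 * Lg ^ 2 * η ^ 2)
            ≤ 4 * Lg ^ 2 * η ^ 2 / (M : ℝ) ^ 2 := by
          rw [div_eq_mul_inv, ← inv_pow]
          nlinarith [mul_nonneg (mul_nonneg (sq_nonneg ((M:ℝ)⁻¹)) (sq_nonneg Lg)) (sq_nonneg η)]
        calc ((M:ℝ)⁻¹) ^ 2 * (2 * Lg ^ 2 * η ^ 2 *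
              ∑ m, (‖xhat m - x0 m‖ ^ 2 + ‖yhat m - y0 m‖ ^ 2))
            = (((M:ℝ)⁻¹) ^ 2 * (2 * Lg ^ 2 * η ^ 2)) *
              ∑ m, (‖xhat m - x0 m‖ ^ 2 + ‖yhat m - y0 m‖ ^ 2) := by ring
          _ ≤ (4 * Lg ^ 2 * η ^ 2 / (M : ℝ) ^ 2) *
              ∑ m, (‖xhat m - x0 m‖ ^ 2 + ‖yhat m - y0 m‖ ^ 2) :=
            mul_le_mul_of_nonneg_right hcoef hRHS3_nonneg
      linarith [h5, h6]
    linarith [hC1, hsum1]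
  · push_neg at hI
    obtain ⟨m₀, hm₀⟩ := hI
    have hnot : ¬ Integrable (fun ω =>
        ‖(M : ℝ)⁻¹ • ∑ m, vnext m ω - (M : ℝ)⁻¹ • ∑ m, gbar m (x1 m) (y1 m)‖ ^ 2) P := by
      intro hInt
      apply hm₀
      rw [hLHSfun] at hInt
      have h1 : MemLp (fun ω => (1 - α) • C + S ω) 2 P :=
        (memLp_two_iff_integrable_sq_norm
          ((measurable_const.add hSmeas).aestronglyMeasurable)).2 hInt
      have hS2 : MemLp S 2 P := by
        have h2 := h1.sub (memLp_const ((1 - α) • C))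
        have h3 : ((fun ω => (1 - α) • C + S ω) - fun _ => (1 - α) • C) = S := by
          funext ω; simp
        rwa [h3] at h2
      have hsumD : MemLp (fun ω => ∑ m, D m ω) 2 P := by
        have h2 : MemLp ((M:ℝ) • S) 2 P := hS2.const_smul (M:ℝ)
        have h3 : ((M:ℝ) • S) = fun ω => ∑ m, D m ω := by
          funext ω
          rw [Pi.smul_apply, hS_def, smul_smul, mul_inv_cancel₀ hM0, one_smul]
        rwa [h3] at h2
      have hsumB : MemLp (fun ω => ∑ m, (1 - α) • B m ω) 2 P :=
        memLp_finset_sum Finset.univ fun m _ => (hB2 m).const_smul (1 - α)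
      have hsumA : MemLp (fun ω => ∑ m, A m ω) 2 P := by
        have h2 := hsumD.sub hsumB
        have h3 : ((fun ω => ∑ m, D m ω) - fun ω => ∑ m, (1 - α) • B m ω)
            = fun ω => α • ∑ m, A m ω := by
          funext ω
          rw [Pi.sub_apply, ← Finset.sum_sub_distrib, Finset.smul_sum]
          refine Finset.sum_congr rfl fun m _ => ?_
          rw [hD_def]
          module
        rw [h3] at h2
        have h4 : MemLp (α⁻¹ • fun ω => α • ∑ m, A m ω) 2 P := h2.const_smul α⁻¹
        have h5 : (α⁻¹ • fun ω => α • ∑ m, A m ω) = fun ω => ∑ m, A m ω := by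
          funext ω
          rw [Pi.smul_apply, smul_smul, inv_mul_cancel₀ hα.ne', one_smul]
        rwa [h5] at h4
      have hYind : IndepFun (∑ j ∈ Finset.univ.erase m₀, A j) (A m₀) P :=
        hAind.indepFun_finset_sum_of_notMem hAmeas (Finset.notMem_erase m₀ Finset.univ)
      have hYeq : (∑ j ∈ Finset.univ.erase m₀, A j)
          = fun ω => ∑ j ∈ Finset.univ.erase m₀, A j ω := by
        funext ω; rw [Finset.sum_apply]
      have hYmeas : Measurable (fun ω => ∑ j ∈ Finset.univ.erase m₀, A j ω) :=
        Finset.measurable_sum _ fun j _ => hAmeas j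
      rw [hYeq] at hYind
      have hXY : MemLp (fun ω => A m₀ ω + ∑ j ∈ Finset.univ.erase m₀, A j ω) 2 P := by
        have h6 : (fun ω => A m₀ ω + ∑ j ∈ Finset.univ.erase m₀, A j ω)
            = fun ω => ∑ m, A m ω := by
          funext ω
          exact Finset.add_sum_erase _ (fun j => A j ω) (Finset.mem_univ m₀)
        rwa [h6]
      exact memLp2_of_indep_add (hAmeas m₀) hYmeas hYind.symm hXY
    rw [integral_undef hnot]
    have h1 : (0:ℝ) ≤ (1 - α) * ‖C‖ ^ 2 :=
      mul_nonneg (by linarith) (sq_nonneg _)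
    have h2 : (0:ℝ) ≤ 2 * α ^ 2 * σ ^ 2 / M := by positivity
    have h3 : (0:ℝ) ≤ (4 * Lg ^ 2 * η ^ 2 / (M : ℝ) ^ 2) *
        ∑ m, (‖xhat m - x0 m‖ ^ 2 + ‖yhat m - y0 m‖ ^ 2) :=
      mul_nonneg (by positivity) hRHS3_nonneg
    linarith
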